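/- Let K ≥ 2, and for each k = 2, …, K let A_k be a real n × n^{k−1} matrix with associated vector field f_k(x) = A_k x^{[k−1]}; set f = Σ_{k=2}^{K} f_k and g(x) = C x for a real m × n matrix C. Define the nonlinear observability matrix O_f(x) as the (n+1)m × n real matrix whose rows are the gradients ∇_x of the components of L_f^j g(x) for j = 0, 1, …, n, and define O_{f_K}(x) analogously using only the maximum-cardinality vector field f_K. If there exists a point x ∈ ℝⁿ at which O_{f_K}(x) has rank n, then there exists a point x ∈ ℝⁿ at which O_f(x) has rank n. (This is the rank-condition form of the proposition: if a nonuniform hypergraph is locally weakly observable when all hyperedges of cardinality less than the maximum cardinality K are removed, then the full nonuniform hypergraph is locally weakly observable.) -/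

import Mathlib

open Matrix BigOperators

noncomputable section

/-- Kronecker product of (column) vectors. -/
def vkron {a b : ℕ} (u : Fin a → ℝ) (v : Fin b → ℝ) : Fin (a * b) → ℝ :=
  fun i => u (finProdFinEquiv.symm i).1 * v (finProdFinEquiv.symm i).2

/-- Cast a vector along an equality of dimensions. -/
def castV {a b : ℕ} (h : a = b) (v : Fin a → ℝ) : Fin b → ℝ :=
  fun i => v (Fin.cast h.symm i)

/-- `vpow x m = x ⊗ x ⊗ ⋯ ⊗ x` (`m` factors), the `m`-fold Kronecker power. -/
def vpow {n : ℕ} (x : Fin n → ℝ) : (m : ℕ) → Fin (n ^ m) → ℝ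
  | 0 => fun _ => 1
  | m + 1 => castV (pow_succ' n m).symm (vkron x (vpow x m))

/-- Kronecker product of matrices. -/
def mkron {a b c d : ℕ} (A : Matrix (Fin a) (Fin b) ℝ) (B : Matrix (Fin c) (Fin d) ℝ) :
    Matrix (Fin (a * c)) (Fin (b * d)) ℝ :=
  fun i j =>
    A (finProdFinEquiv.symm i).1 (finProdFinEquiv.symm j).1 *
      B (finProdFinEquiv.symm i).2 (finProdFinEquiv.symm j).2

/-- Cast a matrix along equalities of dimensions. -/
def castM {a b a' b' : ℕ} (ha : a = a') (hb : b = b')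
    (M : Matrix (Fin a) (Fin b) ℝ) : Matrix (Fin a') (Fin b') ℝ :=
  fun i j => M (Fin.cast ha.symm i) (Fin.cast hb.symm j)

/-- `Bmat k N hk A = Σ_{i=1}^{N} I^{⊗(i-1)} ⊗ A ⊗ I^{⊗(N-i)}`, where `A` is `n × n^(k-1)`
and `I` is the `n × n` identity; the result is an `n^N × n^(N+k-2)` matrix. -/
def Bmat {n : ℕ} (k N : ℕ) (hk : 2 ≤ k) (A : Matrix (Fin n) (Fin (n ^ (k - 1))) ℝ) :
    Matrix (Fin (n ^ N)) (Fin (n ^ (N + k - 2))) ℝ :=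
  ∑ i : Fin N,
    castM (by have := i.isLt; rw [← pow_succ', ← pow_add]; congr 1; omega)
      (by have := i.isLt; have := hk; rw [← pow_add, ← pow_add]; congr 1; omega)
      (mkron (1 : Matrix (Fin (n ^ (i : ℕ))) (Fin (n ^ (i : ℕ))) ℝ)
        (mkron A (1 : Matrix (Fin (n ^ (N - 1 - (i : ℕ)))) (Fin (n ^ (N - 1 - (i : ℕ)))) ℝ)))

/-- Lie derivative of an output map along a vector field. -/
def lieD {n m : ℕ} (f : (Fin n → ℝ) → Fin n → ℝ) (φ : (Fin n → ℝ) → Fin m → ℝ) :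
    (Fin n → ℝ) → Fin m → ℝ :=
  fun x => fderiv ℝ φ x (f x)

/-- Iterated Lie derivative `L_f^j φ`. -/
def lieIter {n m : ℕ} (f : (Fin n → ℝ) → Fin n → ℝ) (φ : (Fin n → ℝ) → Fin m → ℝ) :
    ℕ → (Fin n → ℝ) → Fin m → ℝ
  | 0 => φ
  | j + 1 => lieD f (lieIter f φ j)

/-- The nonlinear observability matrix: the `(n+1)m × n` matrix whose rows are the gradients
of the components of `L_f^j (C x)` for `j = 0, 1, …, n`, evaluated at `x`. -/
def NOM {n m : ℕ} (f : (Fin n → ℝ) → Fin n → ℝ) (C : Matrix (Fin m) (Fin n) ℝ)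
    (x : Fin n → ℝ) : Matrix (Fin (n + 1) × Fin m) (Fin n) ℝ :=
  fun p c =>
    fderiv ℝ (fun y => lieIter f (fun z => C.mulVec z) p.1 y p.2) x (Pi.single c 1)

namespace ObsAux

open Matrix BigOperators

variable {n m : ℕ}

lemma contDiff_mulVec {p q : ℕ} (B : Matrix (Fin p) (Fin q) ℝ) :
    ContDiff ℝ ⊤ (fun v : Fin q → ℝ => B.mulVec v) := by
  rw [contDiff_pi]
  intro i
  have h : (fun v : Fin q → ℝ => B.mulVec v i) = fun v => ∑ j, B i j * v j := by
    funext v; simp [Matrix.mulVec, dotProduct]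
  rw [h]
  exact ContDiff.sum fun j _ => contDiff_const.mul (ContinuousLinearMap.proj j : (Fin q → ℝ) →L[ℝ] ℝ).contDiff

lemma contDiff_vpow (M : ℕ) : ContDiff ℝ ⊤ (fun x : Fin n → ℝ => vpow x M) := by
  induction M with
  | zero => exact contDiff_const
  | succ M ih =>
    rw [contDiff_pi]
    intro i
    have h : (fun x : Fin n → ℝ => vpow x (M + 1) i)
        = fun x => x ((finProdFinEquiv.symm (Fin.cast (pow_succ' n M) i)).1)
            * vpow x M ((finProdFinEquiv.symm (Fin.cast (pow_succ' n M) i)).2) := rfl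
    rw [h]
    exact (ContinuousLinearMap.proj _).contDiff.mul ((contDiff_pi.mp ih) _)

lemma vpow_smul (t : ℝ) (x : Fin n → ℝ) (M : ℕ) : vpow (t • x) M = t ^ M • vpow x M := by
  induction M with
  | zero => funext i; show (1:ℝ) = t ^ 0 * 1; simp
  | succ M ih =>
    funext i
    have h : ∀ y : Fin n → ℝ, vpow y (M + 1) i
        = y ((finProdFinEquiv.symm (Fin.cast (pow_succ' n M) i)).1)
            * vpow y M ((finProdFinEquiv.symm (Fin.cast (pow_succ' n M) i)).2) := fun _ => rfl
    rw [Pi.smul_apply, h, h, ih, Pi.smul_apply, Pi.smul_apply, smul_eq_mul, smul_eq_mul,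
      smul_eq_mul]
    ring

lemma fderiv_homog {E F : Type*} [NormedAddCommGroup E] [NormedSpace ℝ E]
    [NormedAddCommGroup F] [NormedSpace ℝ F]
    {φ : E → F} (hφ : Differentiable ℝ φ) {d : ℕ} (hd : 1 ≤ d)
    (hh : ∀ t : ℝ, t ≠ 0 → ∀ y, φ (t • y) = t ^ d • φ y)
    {t : ℝ} (ht : t ≠ 0) (y : E) (v : E) :
    fderiv ℝ φ (t • y) v = t ^ (d - 1) • fderiv ℝ φ y v := by
  set L : E →L[ℝ] E := t • ContinuousLinearMap.id ℝ E with hL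
  have hcomp : (fun z => φ (t • z)) = φ ∘ L := by
    funext z; simp [hL]
  have h1 : fderiv ℝ (fun z => φ (t • z)) y = (fderiv ℝ φ (t • y)).comp L := by
    rw [hcomp, fderiv_comp y (hφ _) L.differentiableAt, L.fderiv]
    have hLy : L y = t • y := by simp [hL]
    rw [hLy]
  have h2 : fderiv ℝ (fun z => φ (t • z)) y = t ^ d • fderiv ℝ φ y := by
    have hfun : (fun z => φ (t • z)) = fun z => t ^ d • φ z := funext (hh t ht)
    rw [hfun, fderiv_fun_const_smul (hφ y)]
  have h3 : t • fderiv ℝ φ (t • y) v = t ^ d • fderiv ℝ φ y v := by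
    have := congrArg (fun T : E →L[ℝ] F => T v) (h1.symm.trans h2)
    simpa [hL, smul_comm] using this
  obtain ⟨e, rfl⟩ : ∃ e, d = e + 1 := ⟨d - 1, by omega⟩
  have h4 : t • fderiv ℝ φ (t • y) v = t • (t ^ e • fderiv ℝ φ y v) := by
    rw [h3, smul_smul, pow_succ, mul_comm]
  have h5 := smul_right_injective F ht h4
  simpa using h5

lemma lieD_contDiff {f : (Fin n → ℝ) → Fin n → ℝ} (hf : ContDiff ℝ ⊤ f)
    {φ : (Fin n → ℝ) → Fin m → ℝ} (hφ : ContDiff ℝ ⊤ φ) : ContDiff ℝ ⊤ (lieD f φ) :=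
  (hφ.fderiv_right le_top).clm_apply hf

lemma lieD_homog {e d : ℕ} (hd : 1 ≤ d) {f : (Fin n → ℝ) → Fin n → ℝ}
    (hf : ∀ t : ℝ, t ≠ 0 → ∀ y, f (t • y) = t ^ e • f y)
    {φ : (Fin n → ℝ) → Fin m → ℝ} (hφ : Differentiable ℝ φ)
    (hh : ∀ t : ℝ, t ≠ 0 → ∀ y, φ (t • y) = t ^ d • φ y) :
    ∀ t : ℝ, t ≠ 0 → ∀ y, lieD f φ (t • y) = t ^ (d + e - 1) • lieD f φ y := by
  intro t ht y
  show fderiv ℝ φ (t • y) (f (t • y)) = t ^ (d + e - 1) • fderiv ℝ φ y (f y)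
  rw [hf t ht, ContinuousLinearMap.map_smul, fderiv_homog hφ hd hh ht, smul_smul, ← pow_add]
  congr 2
  omega

variable (n m) in
/-- The degree-`(k-1)` homogeneous vector field `y ↦ A_k y^{[k-1]}`. -/
def Fk (A : (k : ℕ) → Matrix (Fin n) (Fin (n ^ (k - 1))) ℝ) (k : ℕ) :
    (Fin n → ℝ) → Fin n → ℝ :=
  fun y => (A k).mulVec (vpow y (k - 1))

lemma Fk_contDiff (A : (k : ℕ) → Matrix (Fin n) (Fin (n ^ (k - 1))) ℝ) (k : ℕ) :
    ContDiff ℝ ⊤ (Fk n A k) :=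
  (contDiff_mulVec _).comp (contDiff_vpow _)

lemma Fk_smul (A : (k : ℕ) → Matrix (Fin n) (Fin (n ^ (k - 1))) ℝ) (k : ℕ)
    (t : ℝ) (y : Fin n → ℝ) : Fk n A k (t • y) = t ^ (k - 1) • Fk n A k y := by
  unfold Fk
  rw [vpow_smul, Matrix.mulVec_smul]

variable (n m) in
/-- `psi A C w = L_{f_{w_0+2}} L_{f_{w_1+2}} ⋯ (C x)`. -/
def psi (M : ℕ) (A : (k : ℕ) → Matrix (Fin n) (Fin (n ^ (k - 1))) ℝ)
    (C : Matrix (Fin m) (Fin n) ℝ) :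
    (j : ℕ) → (Fin j → Fin (M + 1)) → (Fin n → ℝ) → Fin m → ℝ
  | 0, _ => fun z => C.mulVec z
  | j + 1, w => lieD (Fk n A ((w 0 : ℕ) + 2)) (psi M A C j (w ∘ Fin.succ))

variable (n m) in
def wdeg (M : ℕ) (j : ℕ) (w : Fin j → Fin (M + 1)) : ℕ := 1 + ∑ i, (w i : ℕ)

variable {M : ℕ} {A : (k : ℕ) → Matrix (Fin n) (Fin (n ^ (k - 1))) ℝ}
  {C : Matrix (Fin m) (Fin n) ℝ}

lemma wdeg_pos (j : ℕ) (w : Fin j → Fin (M + 1)) : 1 ≤ wdeg M j w := Nat.le_add_right 1 _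

lemma wdeg_le (j : ℕ) (w : Fin j → Fin (M + 1)) : wdeg M j w ≤ 1 + j * M := by
  unfold wdeg
  have : ∑ i, (w i : ℕ) ≤ ∑ _i : Fin j, M :=
    Finset.sum_le_sum fun i _ => Nat.lt_succ_iff.mp (w i).isLt
  simpa using this

lemma psi_contDiff : ∀ (j : ℕ) (w : Fin j → Fin (M + 1)), ContDiff ℝ ⊤ (psi n m M A C j w)
  | 0, _ => contDiff_mulVec C
  | j + 1, w => lieD_contDiff (Fk_contDiff A _) (psi_contDiff j (w ∘ Fin.succ))

lemma psi_smul : ∀ (j : ℕ) (w : Fin j → Fin (M + 1)) (t : ℝ), t ≠ 0 → ∀ y,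
    psi n m M A C j w (t • y) = t ^ (wdeg M j w) • psi n m M A C j w y := by
  intro j
  induction j with
  | zero =>
    intro w t ht y
    show C.mulVec (t • y) = _
    rw [Matrix.mulVec_smul]
    congr 1
    simp [wdeg]
  | succ j ih =>
    intro w t ht y
    have h := lieD_homog (e := (w 0 : ℕ) + 2 - 1) (wdeg_pos j (w ∘ Fin.succ))
      (fun t ht y => Fk_smul A ((w 0 : ℕ) + 2) t y)
      ((psi_contDiff j (w ∘ Fin.succ)).differentiable (by simp))
      (ih (w ∘ Fin.succ)) t ht y
    show lieD (Fk n A ((w 0 : ℕ) + 2)) (psi n m M A C j (w ∘ Fin.succ)) (t • y) = _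
    rw [h]
    congr 2
    unfold wdeg
    rw [Fin.sum_univ_succ]
    simp [Function.comp]
    omega

lemma psi_top : ∀ j : ℕ,
    psi n m M A C j (fun _ => Fin.last M) = lieIter (Fk n A (M + 2)) (fun z => C.mulVec z) j
  | 0 => rfl
  | j + 1 => by
    show lieD (Fk n A ((Fin.last M : ℕ) + 2)) _ = _
    rw [show ((Fin.last M : ℕ) + 2) = M + 2 from by simp,
      show ((fun _ : Fin (j + 1) => Fin.last M) ∘ Fin.succ) = fun _ : Fin j => Fin.last M from rfl,
      psi_top j]
    rfl

lemma lieIter_decomp : ∀ (j : ℕ) (y : Fin n → ℝ),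
    lieIter (fun y => ∑ k ∈ Finset.Icc 2 (M + 2), Fk n A k y) (fun z => C.mulVec z) j y
      = ∑ w : Fin j → Fin (M + 1), psi n m M A C j w y := by
  intro j
  induction j with
  | zero =>
    intro y
    rw [Finset.univ_unique, Finset.sum_singleton]
    rfl
  | succ j ih =>
    intro y
    have hfun : lieIter (fun y => ∑ k ∈ Finset.Icc 2 (M + 2), Fk n A k y)
        (fun z => C.mulVec z) j = fun z => ∑ w : Fin j → Fin (M + 1), psi n m M A C j w z :=
      funext ih
    show fderiv ℝ (lieIter _ _ j) y (∑ k ∈ Finset.Icc 2 (M + 2), Fk n A k y) = _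
    rw [hfun, fderiv_fun_sum (fun w _ =>
      ((psi_contDiff j w).differentiable (by simp)).differentiableAt)]
    rw [ContinuousLinearMap.sum_apply]
    have hswap : ∀ w : Fin j → Fin (M + 1),
        (fderiv ℝ (psi n m M A C j w) y) (∑ k ∈ Finset.Icc 2 (M + 2), Fk n A k y)
          = ∑ k ∈ Finset.Icc 2 (M + 2), lieD (Fk n A k) (psi n m M A C j w) y := by
      intro w
      rw [map_sum]
      rfl
    have hIcc : ∀ w : Fin j → Fin (M + 1),
        ∑ k ∈ Finset.Icc 2 (M + 2), lieD (Fk n A k) (psi n m M A C j w) y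
          = ∑ a : Fin (M + 1), lieD (Fk n A ((a : ℕ) + 2)) (psi n m M A C j w) y := by
      intro w
      rw [show Finset.Icc 2 (M + 2) = Finset.Ico 2 (M + 3) from by
        exact (Finset.Ico_add_one_right_eq_Icc (a := 2) (b := M + 2)).symm, Finset.sum_Ico_eq_sum_range]
      rw [show M + 3 - 2 = M + 1 from rfl, ← Fin.sum_univ_eq_sum_range]
      exact Finset.sum_congr rfl fun a _ => by rw [Nat.add_comm 2 (a : ℕ)]
    rw [Finset.sum_congr rfl fun w _ => (hswap w).trans (hIcc w), Finset.sum_comm,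
      ← Fintype.sum_prod_type']
    refine Fintype.sum_equiv (Fin.consEquiv (fun _ => Fin (M + 1))) _ _ fun p => ?_
    show lieD (Fk n A ((p.1 : ℕ) + 2)) (psi n m M A C j p.2) y
      = psi n m M A C (j + 1) (Fin.cons p.1 p.2) y
    show _ = lieD (Fk n A (((Fin.cons p.1 p.2 : Fin (j+1) → Fin (M+1)) 0 : ℕ) + 2))
      (psi n m M A C j ((Fin.cons p.1 p.2 : Fin (j+1) → Fin (M+1)) ∘ Fin.succ)) y
    rw [show ((Fin.cons p.1 p.2 : Fin (j+1) → Fin (M+1)) ∘ Fin.succ) = p.2 from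
      funext fun i => by simp [Function.comp], Fin.cons_zero]

lemma psi_comp_contDiff (j : ℕ) (w : Fin j → Fin (M + 1)) (i : Fin m) :
    ContDiff ℝ ⊤ (fun y => psi n m M A C j w y i) :=
  (contDiff_pi.mp (psi_contDiff j w)) i

lemma psi_comp_smul (j : ℕ) (w : Fin j → Fin (M + 1)) (i : Fin m) :
    ∀ t : ℝ, t ≠ 0 → ∀ y, (fun y => psi n m M A C j w y i) (t • y)
      = t ^ (wdeg M j w) • (fun y => psi n m M A C j w y i) y := by
  intro t ht y
  show psi n m M A C j w (t • y) i = _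
  rw [psi_smul j w t ht y]
  simp

lemma NOM_f_entry (x : Fin n → ℝ) {t : ℝ} (ht : t ≠ 0) (p : Fin (n + 1) × Fin m) (c : Fin n) :
    NOM (fun y => ∑ k ∈ Finset.Icc 2 (M + 2), (A k).mulVec (vpow y (k - 1))) C (t • x) p c
      = ∑ w : Fin (p.1 : ℕ) → Fin (M + 1), t ^ (wdeg M (p.1 : ℕ) w - 1) *
          fderiv ℝ (fun y => psi n m M A C (p.1 : ℕ) w y p.2) x (Pi.single c 1) := by
  show fderiv ℝ (fun y => lieIter (fun y => ∑ k ∈ Finset.Icc 2 (M + 2), Fk n A k y)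
      (fun z => C.mulVec z) (p.1 : ℕ) y p.2) (t • x) (Pi.single c 1) = _
  have hfun : (fun y => lieIter (fun y => ∑ k ∈ Finset.Icc 2 (M + 2), Fk n A k y)
      (fun z => C.mulVec z) (p.1 : ℕ) y p.2)
      = fun y => ∑ w : Fin (p.1 : ℕ) → Fin (M + 1), psi n m M A C (p.1 : ℕ) w y p.2 := by
    funext y
    rw [lieIter_decomp, Finset.sum_apply]
  rw [hfun, fderiv_fun_sum (fun w _ =>
    ((psi_comp_contDiff (p.1 : ℕ) w p.2).differentiable (by simp)).differentiableAt),
    ContinuousLinearMap.sum_apply]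
  refine Finset.sum_congr rfl fun w _ => ?_
  rw [fderiv_homog ((psi_comp_contDiff (p.1 : ℕ) w p.2).differentiable (by simp))
    (wdeg_pos _ _) (psi_comp_smul (p.1 : ℕ) w p.2) ht x (Pi.single c 1)]
  rfl

lemma NOM_K_entry (x : Fin n → ℝ) (p : Fin (n + 1) × Fin m) (c : Fin n) :
    NOM (fun y => (A (M + 2)).mulVec (vpow y (M + 2 - 1))) C x p c
      = fderiv ℝ (fun y => psi n m M A C (p.1 : ℕ) (fun _ => Fin.last M) y p.2) x
          (Pi.single c 1) := by
  show fderiv ℝ (fun y => lieIter (Fk n A (M + 2)) (fun z => C.mulVec z) (p.1 : ℕ) y p.2)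
      x (Pi.single c 1) = _
  rw [psi_top (p.1 : ℕ)]

lemma det_ne_zero_of_rank_eq {r : ℕ} (B : Matrix (Fin r) (Fin r) ℝ) (hB : B.rank = r) :
    B.det ≠ 0 := by
  intro h0
  obtain ⟨v, hv, hBv⟩ := Matrix.exists_mulVec_eq_zero_iff.mpr h0
  have h1 := LinearMap.finrank_range_add_finrank_ker B.mulVecLin
  have h2 : Module.finrank ℝ (Fin r → ℝ) = r := by simp
  have h3 : Module.finrank ℝ (LinearMap.ker B.mulVecLin) = 0 := by
    unfold Matrix.rank at hB
    omega
  have h4 : LinearMap.ker B.mulVecLin = ⊥ := Submodule.finrank_eq_zero.mp h3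
  have h5 : v ∈ LinearMap.ker B.mulVecLin := by
    rw [LinearMap.mem_ker, Matrix.mulVecLin_apply]
    exact hBv
  rw [h4, Submodule.mem_bot] at h5
  exact hv h5

lemma rank_eq_of_det_ne {r : ℕ} (B : Matrix (Fin r) (Fin r) ℝ) (h : B.det ≠ 0) :
    B.rank = r := by
  have hu : IsUnit B := (Matrix.isUnit_iff_isUnit_det B).mpr (isUnit_iff_ne_zero.mpr h)
  simpa using Matrix.rank_of_isUnit B hu

end ObsAux

/-- For `f_k(x) = A_k x^{[k-1]}` (`k = 2, …, K`, `K ≥ 2`),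
`f = Σ_{k=2}^K f_k` and output matrix `C`: if the observability matrix of the
maximum-cardinality field `f_K` has rank `n` at some point, then the observability matrix of
`f` has rank `n` at some point (local weak observability of the full nonuniform hypergraph
follows from that of the top-cardinality uniform part). -/
theorem observable_of_top_cardinality_observable (n m K : ℕ) (hK : 2 ≤ K)
    (A : (k : ℕ) → Matrix (Fin n) (Fin (n ^ (k - 1))) ℝ)
    (C : Matrix (Fin m) (Fin n) ℝ)
    (h : ∃ x : Fin n → ℝ, (NOM (fun y => (A K).mulVec (vpow y (K - 1))) C x).rank = n) :
    ∃ x : Fin n → ℝ,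
      (NOM (fun y => ∑ k ∈ Finset.Icc 2 K, (A k).mulVec (vpow y (k - 1))) C x).rank = n := by
  classical
  obtain ⟨M, rfl⟩ : ∃ M, K = M + 2 := ⟨K - 2, by omega⟩
  obtain ⟨x, hx⟩ := h
  -- the "leading coefficient" matrix entries
  set aw : (p : Fin (n + 1) × Fin m) → (Fin (p.1 : ℕ) → Fin (M + 1)) → Fin n → ℝ :=
    fun p w c => fderiv ℝ (fun y => ObsAux.psi n m M A C (p.1 : ℕ) w y p.2) x (Pi.single c 1)
    with haw
  set G : ℝ → Matrix (Fin (n + 1) × Fin m) (Fin n) ℝ :=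
    fun s p c => ∑ w : Fin (p.1 : ℕ) → Fin (M + 1),
      s ^ ((p.1 : ℕ) * M + 1 - ObsAux.wdeg M (p.1 : ℕ) w) * aw p w c with hG
  have hwtop : ∀ j : ℕ, ObsAux.wdeg M j (fun _ : Fin j => Fin.last M) = 1 + j * M := by
    intro j
    simp [ObsAux.wdeg, Finset.sum_const, Finset.card_univ, mul_comm]
  have hG0 : G 0 = NOM (fun y => (A (M + 2)).mulVec (vpow y (M + 2 - 1))) C x := by
    funext p c
    rw [ObsAux.NOM_K_entry x p c, hG]
    beta_reduce
    rw [Finset.sum_eq_single (fun _ : Fin (p.1 : ℕ) => Fin.last M)]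
    · rw [hwtop, show (p.1 : ℕ) * M + 1 - (1 + (p.1 : ℕ) * M) = 0 from by omega, pow_zero,
        one_mul]
    · intro w _ hw
      obtain ⟨i, hi⟩ := Function.ne_iff.mp hw
      have hlt : ∑ i, (w i : ℕ) < (p.1 : ℕ) * M := by
        have : ∑ i, (w i : ℕ) < ∑ _i : Fin (p.1 : ℕ), M := by
          refine Finset.sum_lt_sum (fun i _ => Nat.lt_succ_iff.mp (w i).isLt) ⟨i, Finset.mem_univ i, ?_⟩
          have h1 : (w i : ℕ) ≤ M := Nat.lt_succ_iff.mp (w i).isLt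
          have h2 : (w i : ℕ) ≠ M := fun hc => hi (Fin.ext (by simp [hc]))
          omega
        simpa [mul_comm] using this
      rw [zero_pow (by unfold ObsAux.wdeg; omega), zero_mul]
    · intro hmem
      exact absurd (Finset.mem_univ _) hmem
  have hGs : ∀ s : ℝ, s ≠ 0 →
      G s = (Matrix.diagonal fun p : Fin (n + 1) × Fin m => s ^ ((p.1 : ℕ) * M)) *
        NOM (fun y => ∑ k ∈ Finset.Icc 2 (M + 2), (A k).mulVec (vpow y (k - 1))) C (s⁻¹ • x) := by
    intro s hs
    funext p c
    rw [Matrix.diagonal_mul, ObsAux.NOM_f_entry x (inv_ne_zero hs) p c, Finset.mul_sum, hG]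
    beta_reduce
    refine Finset.sum_congr rfl fun w _ => ?_
    have hle := ObsAux.wdeg_le (M := M) (p.1 : ℕ) w
    have hpos := ObsAux.wdeg_pos (M := M) (p.1 : ℕ) w
    rw [inv_pow, ← mul_assoc]
    congr 1
    have h1 : s ^ ((p.1 : ℕ) * M)
        = s ^ ((p.1 : ℕ) * M + 1 - ObsAux.wdeg M (p.1 : ℕ) w)
          * s ^ (ObsAux.wdeg M (p.1 : ℕ) w - 1) := by
      rw [← pow_add]
      congr 1
      omega
    rw [h1, mul_assoc, mul_inv_cancel₀ (pow_ne_zero _ hs), mul_one]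
  -- continuity of the determinant criterion
  have hGcont : Continuous G := by
    rw [hG]
    refine continuous_matrix fun p c => ?_
    exact continuous_finset_sum _ fun w _ => (continuous_pow _).mul continuous_const
  set q : ℝ → ℝ := fun s => ((G s)ᵀ * G s).det with hq
  have hqc : Continuous q := (hGcont.matrix_transpose.matrix_mul hGcont).matrix_det
  have hq0 : q 0 ≠ 0 := by
    apply ObsAux.det_ne_zero_of_rank_eq
    rw [Matrix.rank_transpose_mul_self, hG0]
    exact hx
  have hev : ∀ᶠ s in nhdsWithin (0 : ℝ) ({0}ᶜ : Set ℝ), q s ≠ 0 :=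
    (hqc.continuousAt.eventually_ne hq0).filter_mono nhdsWithin_le_nhds
  obtain ⟨s, hs0', hqs⟩ := (eventually_mem_nhdsWithin.and hev).exists
  have hs0 : s ≠ 0 := hs0'
  refine ⟨s⁻¹ • x, ?_⟩
  have hrGs : (G s).rank = n := by
    rw [← Matrix.rank_transpose_mul_self (G s)]
    exact ObsAux.rank_eq_of_det_ne _ hqs
  rw [hGs s hs0] at hrGs
  refine le_antisymm ((Matrix.rank_le_card_width _).trans (by simp)) ?_
  calc n = _ := hrGs.symm
    _ ≤ _ := Matrix.rank_mul_le_right _ _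

end
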